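/- Let M = U(h_n)v be a W_n^+-module (1 < n < ∞) free of rank 1 over U(h_n). Then for each i with 1 ≤ i ≤ n, and for every k_i ≥ -1, the element t_i^{k_i} ∂_i · v lies in ℂ[∂_i] v. -/

import Mathlib

/-- `k ∈ ℤ^n` is an admissible exponent for `t^k ∂_i ∈ W_n^+`. -/
def Admissible {n : ℕ} (i : Fin n) (k : Fin n → ℤ) : Prop :=
  -1 ≤ k i ∧ ∀ j : Fin n, j ≠ i → 0 ≤ k j

namespace W16aux

section Univariate
open Polynomial


variable {A : Type*} [CommRing A]

private lemma coeff_shift_top (r : A) (h : A[X]) {m : ℕ} (hm : h.natDegree ≤ m) :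
    (h.comp (X + C r)).coeff m = h.coeff m := by
  rw [comp_eq_sum_left, sum_def, finset_sum_coeff]
  rw [Finset.sum_eq_single m]
  · simp [coeff_C_mul, coeff_X_add_C_pow]
  · intro t ht hne
    have h1 : t ≤ m := le_trans (le_natDegree_of_mem_supp t ht) hm
    have h2 : t < m := lt_of_le_of_ne h1 hne
    simp [coeff_C_mul, coeff_X_add_C_pow, Nat.choose_eq_zero_of_lt h2]
  · intro hm'
    simp [notMem_support_iff.mp hm']

private lemma coeff_shift_sub (r : A) (h : A[X]) {m : ℕ} (hm : h.natDegree ≤ m + 1) :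
    (h.comp (X + C r)).coeff m
      = h.coeff m + ((m + 1 : ℕ) : A) * r * h.coeff (m + 1) := by
  conv_lhs => rw [← monomial_add_erase h (m + 1)]
  have he : (h.erase (m + 1)).natDegree ≤ m := by
    rw [natDegree_le_iff_coeff_eq_zero]
    intro N hN
    rcases eq_or_ne N (m + 1) with rfl | hne
    · exact erase_same h _
    · rw [coeff_erase, if_neg hne]
      exact coeff_eq_zero_of_natDegree_lt (lt_of_le_of_lt hm (by omega))
  have hmon : (((monomial (m+1)) (h.coeff (m+1))).comp (X + C r)).coeff m
      = ((m + 1 : ℕ) : A) * r * h.coeff (m + 1) := by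
    rw [← C_mul_X_pow_eq_monomial, mul_comp, C_comp, pow_comp, X_comp,
      coeff_C_mul, coeff_X_add_C_pow]
    have h1 : m + 1 - m = 1 := by omega
    rw [h1, Nat.choose_succ_self_right, pow_one]
    ring
  rw [add_comp, coeff_add, coeff_shift_top r _ he, coeff_erase, if_neg (by omega : ¬ m = m+1),
    hmon]
  exact add_comm _ _

private lemma const_of_shift_eq [IsDomain A] [CharZero A] {h : A[X]}
    (hh : h.comp (X + C 1) = h) : ∃ c, h = C c := by
  have hev : ∀ m : ℕ, h.eval ((m : A)) = h.eval 0 := by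
    intro m
    induction m with
    | zero => norm_num
    | succ k ih =>
      have h2 := congrArg (Polynomial.eval ((k : A))) hh
      rw [eval_comp, eval_add, eval_X, eval_C] at h2
      push_cast
      rw [h2, ih]
  have hg : h - C (h.eval 0) = 0 := by
    apply eq_zero_of_infinite_isRoot
    apply Set.Infinite.mono (s := Set.range ((↑·) : ℕ → A))
    · rintro x ⟨m, rfl⟩
      simp only [Set.mem_setOf_eq, IsRoot, eval_sub, eval_C, hev m, sub_self]
    · exact Set.infinite_range_of_injective Nat.cast_injective
  exact ⟨h.eval 0, sub_eq_zero.mp hg⟩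


private theorem core {A : Type*} [CommRing A] [IsDomain A] [CharZero A]
    (ι : ℤ → A →+* A)
    (hι : ∀ a b x, ι a (ι b x) = ι (a + b) x)
    (hι0 : ∀ x, ι 0 x = x)
    (B : ℤ → A[X]) (Q : A[X])
    (hQ : Q ≠ 0) (hB0 : B 0 ≠ 0)
    (hQB : ∀ k : ℤ, -1 ≤ k → Q * (B k).comp (X + C 1) = B k * (Q.map (ι k)))
    (hCH : ∀ k : ℤ, 0 ≤ k →
      B (-1) * (B k).map (ι (-1)) - B k * (B (-1)).map (ι k)
        = ((k + 1 : ℤ) : A[X]) * B (k - 1))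
    (k0 : ℤ) (hk0 : -1 ≤ k0) :
    ∃ c : A, B k0 = C c := by
  have hBnat : ∀ m : ℕ, B (m : ℤ) ≠ 0 := by
    intro m
    induction m with
    | zero => exact_mod_cast hB0
    | succ t ih =>
      intro h0
      have hch := hCH ((t : ℤ) + 1) (by omega)
      rw [show ((t : ℤ) + 1) = ((t + 1 : ℕ) : ℤ) by push_cast; ring, h0] at hch
      simp only [Polynomial.map_zero, mul_zero, zero_mul, sub_zero, zero_sub, neg_eq_zero] at hch
      rw [show ((t + 1 : ℕ) : ℤ) - 1 = (t : ℤ) by push_cast; ring] at hch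
      have hc : ((((t + 1 : ℕ) : ℤ) + 1 : ℤ) : A[X]) ≠ 0 :=
        Int.cast_ne_zero.mpr (by push_cast; omega)
      rcases mul_eq_zero.mp hch.symm with h | h
      · exact hc h
      · exact ih h
  have hBm1 : B (-1) ≠ 0 := by
    intro h0
    have hch := hCH 1 (by norm_num)
    rw [h0] at hch
    simp only [Polynomial.map_zero, mul_zero, zero_mul, sub_zero, zero_sub] at hch
    norm_num at hch
    exact hBnat 0 (by exact_mod_cast hch)
  have hBk : ∀ k : ℤ, -1 ≤ k → B k ≠ 0 := by
    intro k hk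
    rcases eq_or_lt_of_le hk with h | h
    · rw [← h]; exact hBm1
    · rw [show k = ((k.toNat : ℕ) : ℤ) by omega]; exact hBnat _
  set e := Q.natDegree with he_def
  set qt := Q.coeff e with hqt_def
  set f := Q.coeff (e - 1) with hf_def
  have hqt : qt ≠ 0 := leadingCoeff_ne_zero.mpr hQ
  have W2 : ∀ k : ℤ, -1 ≤ k →
      ι k qt = qt ∧ (((B k).natDegree : A) * qt = ι k f - f) := by
    intro k hk
    have hE := hQB k hk
    by_cases hΔ : (B k).comp (X + C 1) = B k
    · have hρ : Q.map (ι k) = Q := by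
        rw [hΔ] at hE
        have : B k * Q = B k * Q.map (ι k) := by linear_combination hE
        exact (mul_left_cancel₀ (hBk k hk) this).symm
      have hd : (B k).natDegree = 0 := by
        obtain ⟨c, hc⟩ := const_of_shift_eq hΔ
        rw [hc]; exact natDegree_C c
      refine ⟨?_, ?_⟩
      · have := congrArg (fun p => p.coeff e) hρ
        simpa [coeff_map] using this
      · have := congrArg (fun p => p.coeff (e - 1)) hρ
        simp only [coeff_map] at this
        rw [hd]
        simp [hf_def, this]
    · have hBkne := hBk k hk
      set Bk := B k with hBk_def
      set d := Bk.natDegree with hd_def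
      set D := Bk.comp (X + C 1) - Bk with hD_def
      have hDne : D ≠ 0 := sub_ne_zero.mpr hΔ
      set S := Q.map (ι k) - Q with hS_def
      have hE' : Q * D = Bk * S := by
        rw [hD_def, hS_def]; ring_nf; linear_combination hE
      have hd1 : 1 ≤ d := by
        by_contra hcon
        have h0 : d = 0 := by omega
        obtain hc := eq_C_of_natDegree_eq_zero h0
        exact hΔ (by rw [hc, C_comp])
      have hdD : D.natDegree ≤ d - 1 := by
        rw [natDegree_le_iff_coeff_eq_zero]
        intro N hN
        have hdN : d ≤ N := by omega
        rw [coeff_sub, coeff_shift_top _ _ (le_trans (le_of_eq hd_def.symm) hdN), sub_self]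
      have hlead : Bk.coeff d ≠ 0 := leadingCoeff_ne_zero.mpr hBkne
      have hcD : D.coeff (d - 1) = (d : A) * Bk.coeff d := by
        rw [coeff_sub, coeff_shift_sub _ _ (by omega : Bk.natDegree ≤ (d - 1) + 1)]
        rw [show d - 1 + 1 = d by omega]
        ring
      have hcDne : D.coeff (d - 1) ≠ 0 := by
        rw [hcD]
        exact mul_ne_zero (Nat.cast_ne_zero.mpr (by omega)) hlead
      have hdD' : D.natDegree = d - 1 := le_antisymm hdD (le_natDegree_of_ne_zero hcDne)
      have hSne : S ≠ 0 := by
        intro h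
        rw [h, mul_zero] at hE'
        exact (mul_ne_zero hQ hDne) hE'
      have hdeg : e + (d - 1) = d + S.natDegree := by
        have h2 := congrArg natDegree hE'
        rwa [natDegree_mul hQ hDne, natDegree_mul hBkne hSne, hdD'] at h2
      have he1 : 1 ≤ e := by omega
      have hdS : S.natDegree = e - 1 := by omega
      have hqtfix : ι k qt = qt := by
        have h3 : S.coeff e = 0 := coeff_eq_zero_of_natDegree_lt (by omega)
        rw [coeff_sub, coeff_map] at h3
        exact sub_eq_zero.mp h3
      refine ⟨hqtfix, ?_⟩
      have hLC := congrArg leadingCoeff hE'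
      rw [leadingCoeff_mul, leadingCoeff_mul] at hLC
      have hLD : D.leadingCoeff = (d : A) * Bk.coeff d := by
        rw [leadingCoeff, hdD', hcD]
      have hLS : S.leadingCoeff = ι k f - f := by
        rw [leadingCoeff, hdS, coeff_sub, coeff_map]
      rw [hLD, hLS] at hLC
      have hfin : Bk.coeff d * ((d : A) * qt) = Bk.coeff d * (ι k f - f) := by
        have hl1 : Bk.leadingCoeff = Bk.coeff d := rfl
        have hl2 : Q.leadingCoeff = qt := rfl
        rw [hl1, hl2] at hLC
        linear_combination hLC
      exact mul_left_cancel₀ hlead hfin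
  obtain ⟨hfix1, heq1⟩ := W2 1 (by norm_num)
  obtain ⟨hfixm, heqm⟩ := W2 (-1) (by norm_num)
  have h2 : ((B (-1)).natDegree : A) * qt = f - ι 1 f := by
    have h3 := congrArg (ι 1) heqm
    rw [map_mul, map_natCast, map_sub, hι 1 (-1) f, show (1 : ℤ) + -1 = 0 by norm_num,
      hι0 f, hfix1] at h3
    exact h3
  have hsum : (((B 1).natDegree + (B (-1)).natDegree : ℕ) : A) * qt = 0 := by
    push_cast
    linear_combination heq1 + h2
  have hd0 : (B 1).natDegree = 0 ∧ (B (-1)).natDegree = 0 := by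
    have h4 := (mul_eq_zero.mp hsum).resolve_right hqt
    have h5 := Nat.cast_eq_zero.mp h4
    omega
  have hρ1 : Q.map (ι 1) = Q := by
    have hE := hQB 1 (by norm_num)
    obtain ⟨c, hc⟩ : ∃ c, B 1 = C c := ⟨_, eq_C_of_natDegree_eq_zero hd0.1⟩
    rw [hc, C_comp] at hE
    have h6 : C c * Q = C c * Q.map (ι 1) := by linear_combination hE
    have hcne : (C c : A[X]) ≠ 0 := by rw [← hc]; exact hBk 1 (by norm_num)
    exact (mul_left_cancel₀ hcne h6).symm
  have hiter : ∀ (x : A), ι 1 x = x → ∀ k : ℤ, -1 ≤ k → ι k x = x := by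
    intro x hx k hk
    have hnat : ∀ m : ℕ, ι (m : ℤ) x = x := by
      intro m
      induction m with
      | zero => exact hι0 x
      | succ t ih =>
        have h7 : ι 1 (ι t x) = ι (1 + t) x := hι 1 t x
        rw [ih, hx] at h7
        rw [show ((t + 1 : ℕ) : ℤ) = 1 + (t : ℤ) by push_cast; ring, ← h7]
    rcases eq_or_lt_of_le hk with h | h
    · have h8 : ι (-1) (ι 1 x) = ι 0 x := by rw [hι (-1) 1 x]; norm_num
      rw [hx, hι0 x] at h8
      rw [← h]; exact h8
    · rw [show k = ((k.toNat : ℕ) : ℤ) by omega]; exact hnat _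
  have hρk0 : Q.map (ι k0) = Q := by
    ext m
    rw [coeff_map]
    apply hiter _ _ k0 hk0
    have h9 := congrArg (fun p => p.coeff m) hρ1
    simpa [coeff_map] using h9
  have hE := hQB k0 hk0
  rw [hρk0] at hE
  have h10 : Q * (B k0).comp (X + C 1) = Q * B k0 := by linear_combination hE
  exact const_of_shift_eq (mul_left_cancel₀ hQ h10)


end Univariate

section Glue
open MvPolynomial

variable {n : ℕ}

/-- The shift substitution `X c ↦ X c - m c`. -/
noncomputable def tau (m : Fin n → ℤ) :
    MvPolynomial (Fin n) ℂ →ₐ[ℂ] MvPolynomial (Fin n) ℂ :=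
  aeval (fun c => X c - C ((m c : ℂ)))

lemma tau_X (m : Fin n → ℤ) (c : Fin n) :
    tau m (X c) = X c - C ((m c : ℂ)) := by simp [tau]

lemma tau_C (m : Fin n → ℤ) (z : ℂ) : tau m (C z) = C z := by
  simp [tau, algebraMap_eq]

/-- The separation isomorphism at the variable `j`. -/
noncomputable def Psi (j : Fin n) :
    MvPolynomial (Fin n) ℂ ≃ₐ[ℂ] Polynomial (MvPolynomial {l : Fin n // l ≠ j} ℂ) :=
  (renameEquiv ℂ (Equiv.optionSubtypeNe j).symm).trans
    (optionEquivLeft ℂ {l : Fin n // l ≠ j})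

lemma Psi_X_self (j : Fin n) : Psi j (X j) = Polynomial.X := by
  simp [Psi, renameEquiv_apply, rename_X, Equiv.optionSubtypeNe_symm_self,
    optionEquivLeft_X_none]

lemma Psi_X_ne (j : Fin n) {l : Fin n} (h : l ≠ j) :
    Psi j (X l) = Polynomial.C (X ⟨l, h⟩) := by
  simp [Psi, renameEquiv_apply, rename_X, Equiv.optionSubtypeNe_symm_of_ne h,
    optionEquivLeft_X_some]

lemma Psi_C (j : Fin n) (z : ℂ) : Psi j (C z) = Polynomial.C (C z) := by
  have h1 : (C z : MvPolynomial (Fin n) ℂ) = algebraMap ℂ _ z := rfl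
  rw [h1, AlgEquiv.commutes, Polynomial.algebraMap_apply, algebraMap_eq]

/-- The inner shift substitution `X i' ↦ X i' - z`. -/
noncomputable def iot (j : Fin n) (i' : {l : Fin n // l ≠ j}) (z : ℂ) :
    MvPolynomial {l : Fin n // l ≠ j} ℂ →ₐ[ℂ] MvPolynomial {l : Fin n // l ≠ j} ℂ :=
  aeval (fun v => if v = i' then X v - C z else X v)

lemma iot_X_self (j : Fin n) (i' : {l : Fin n // l ≠ j}) (z : ℂ) :
    iot j i' z (X i') = X i' - C z := by simp [iot]

lemma iot_X_ne (j : Fin n) (i' : {l : Fin n // l ≠ j}) (v : {l : Fin n // l ≠ j})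
    (hv : v ≠ i') (z : ℂ) : iot j i' z (X v) = X v := by simp [iot, hv]

lemma iot_C (j : Fin n) (i' : {l : Fin n // l ≠ j}) (z w : ℂ) :
    iot j i' z (C w) = C w := by simp [iot, algebraMap_eq]

lemma iot_comp (j : Fin n) (i' : {l : Fin n // l ≠ j}) (z w : ℂ) (x) :
    iot j i' z (iot j i' w x) = iot j i' (z + w) x := by
  have key : (iot j i' z).comp (iot j i' w) = iot j i' (z + w) := by
    apply algHom_ext
    intro v
    by_cases hv : v = i'
    · subst hv
      simp only [AlgHom.coe_comp, Function.comp_apply, iot_X_self, map_sub, iot_C]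
      rw [C_add]
      ring
    · simp only [AlgHom.coe_comp, Function.comp_apply, iot_X_ne j i' v hv]
  exact AlgHom.congr_fun key x

lemma iot_zero (j : Fin n) (i' : {l : Fin n // l ≠ j}) (x) : iot j i' 0 x = x := by
  have key : iot j i' 0 = AlgHom.id ℂ _ := by
    apply algHom_ext
    intro v
    by_cases hv : v = i'
    · subst hv; simp [iot]
    · simp [iot, hv]
  rw [key]; rfl

lemma G1 (j : Fin n) (c : ℤ) (h : MvPolynomial (Fin n) ℂ) :
    Psi j (tau (Pi.single j c) h)
      = (Psi j h).comp (Polynomial.X - Polynomial.C (C ((c : ℂ)))) := by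
  have key : (((Polynomial.aeval
        (Polynomial.X - Polynomial.C (C ((c : ℂ))) :
          Polynomial (MvPolynomial {l : Fin n // l ≠ j} ℂ))).restrictScalars ℂ).comp
        ((Psi j).toAlgHom))
      = ((Psi j).toAlgHom).comp (tau (Pi.single j c)) := by
    apply algHom_ext
    intro l
    show Polynomial.aeval _ (Psi j (X l)) = Psi j (tau (Pi.single j c) (X l))
    rw [tau_X]
    by_cases hl : l = j
    · subst hl
      rw [Pi.single_eq_same, map_sub, Psi_X_self, Psi_C, Polynomial.aeval_X]
    · rw [Pi.single_eq_of_ne hl, Int.cast_zero, C_0, sub_zero, Psi_X_ne j hl,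
        Polynomial.aeval_C]
      rfl
  exact (AlgHom.congr_fun key h).symm

lemma G2 (j : Fin n) (i' : {l : Fin n // l ≠ j}) (k : ℤ) (h : MvPolynomial (Fin n) ℂ) :
    Psi j (tau (Pi.single i'.val k) h)
      = (Psi j h).map (iot j i' ((k : ℂ))).toRingHom := by
  obtain ⟨iv, hiv⟩ := i'
  have key : ((Polynomial.mapAlgHom (iot j ⟨iv, hiv⟩ ((k : ℂ)))).comp
        ((Psi j).toAlgHom))
      = ((Psi j).toAlgHom).comp (tau (Pi.single iv k)) := by
    apply algHom_ext
    intro l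
    show Polynomial.map _ (Psi j (X l)) = Psi j (tau (Pi.single iv k) (X l))
    rw [tau_X]
    by_cases hl : l = j
    · subst hl
      rw [Pi.single_eq_of_ne (Ne.symm hiv), Int.cast_zero, C_0, sub_zero,
        Psi_X_self, Polynomial.map_X]
    · rw [Psi_X_ne j hl, Polynomial.map_C]
      by_cases hli : l = iv
      · subst hli
        rw [Pi.single_eq_same, map_sub, Psi_X_ne j hl, Psi_C]
        show Polynomial.C ((iot j ⟨l, hiv⟩ ((k : ℂ))) (X ⟨l, hiv⟩)) = _
        rw [iot_X_self, map_sub]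
      · rw [Pi.single_eq_of_ne hli, Int.cast_zero, C_0, sub_zero, Psi_X_ne j hl]
        have hvne : (⟨l, hl⟩ : {a : Fin n // a ≠ j}) ≠ ⟨iv, hiv⟩ := by
          intro hcon
          exact hli (congrArg Subtype.val hcon)
        show Polynomial.C ((iot j ⟨iv, hiv⟩ ((k : ℂ))) (X ⟨l, hl⟩)) = _
        rw [iot_X_ne j _ _ hvne]
  exact (AlgHom.congr_fun key h).symm

lemma Psi_rename (j : Fin n) (c : MvPolynomial {l : Fin n // l ≠ j} ℂ) :
    Psi j (rename (Subtype.val) c) = Polynomial.C c := by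
  have key : ((Psi j).toAlgHom).comp (rename (R := ℂ) (Subtype.val))
      = IsScalarTower.toAlgHom ℂ (MvPolynomial {l : Fin n // l ≠ j} ℂ)
          (Polynomial (MvPolynomial {l : Fin n // l ≠ j} ℂ)) := by
    apply algHom_ext
    intro v
    show Psi j (rename Subtype.val (X v)) = algebraMap _ _ (X v)
    rw [rename_X, Psi_X_ne j v.prop, Polynomial.algebraMap_eq]
  exact AlgHom.congr_fun key c

lemma adm_zero (c : Fin n) : Admissible c (0 : Fin n → ℤ) := by
  constructor
  · simp
  · intro l _; simp

lemma adm_single (a : Fin n) (k : ℤ) (hk : -1 ≤ k) :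
    Admissible a (Pi.single a k) := by
  constructor
  · simpa using hk
  · intro l hl
    rw [Pi.single_eq_of_ne hl]

lemma Tstruct (T : Fin n → (Fin n → ℤ) → (MvPolynomial (Fin n) ℂ →ₗ[ℂ] MvPolynomial (Fin n) ℂ))
    (h0 : ∀ (j : Fin n) (f : MvPolynomial (Fin n) ℂ), T j 0 f = X j * f)
    (hbr : ∀ (i j : Fin n) (r s : Fin n → ℤ), Admissible i r → Admissible j s →
      ∀ f : MvPolynomial (Fin n) ℂ,
        T i r (T j s f) - T j s (T i r f)
          = (s i : ℂ) • T j (r + s) f - (r j : ℂ) • T i (r + s) f)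
    {a : Fin n} {m : Fin n → ℤ} (ha : Admissible a m)
    (f : MvPolynomial (Fin n) ℂ) : T a m f = T a m 1 * tau m f := by
  have hcomm : ∀ (c : Fin n) (g : MvPolynomial (Fin n) ℂ),
      T a m (X c * g) = (X c - C ((m c : ℂ))) * T a m g := by
    intro c g
    have hb := hbr c a 0 m (adm_zero c) ha g
    rw [h0, h0] at hb
    simp only [Pi.zero_apply, Int.cast_zero, zero_smul, sub_zero] at hb
    rw [zero_add, smul_eq_C_mul] at hb
    linear_combination -hb
  induction f using MvPolynomial.induction_on with
  | C z =>
    have h1 : (C z : MvPolynomial (Fin n) ℂ) = z • 1 := by rw [smul_eq_C_mul, mul_one]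
    rw [tau_C]
    conv_lhs => rw [h1]
    rw [map_smul, smul_eq_C_mul]
    ring
  | add p q hp hq =>
    rw [map_add, map_add, hp, hq]
    ring
  | mul_X p c hp =>
    rw [show p * X c = X c * p by ring, hcomm c p, hp, map_mul, tau_X]
    ring

lemma rel (T : Fin n → (Fin n → ℤ) → (MvPolynomial (Fin n) ℂ →ₗ[ℂ] MvPolynomial (Fin n) ℂ))
    (h0 : ∀ (j : Fin n) (f : MvPolynomial (Fin n) ℂ), T j 0 f = X j * f)
    (hbr : ∀ (i j : Fin n) (r s : Fin n → ℤ), Admissible i r → Admissible j s →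
      ∀ f : MvPolynomial (Fin n) ℂ,
        T i r (T j s f) - T j s (T i r f)
          = (s i : ℂ) • T j (r + s) f - (r j : ℂ) • T i (r + s) f)
    {a b : Fin n} {r s : Fin n → ℤ} (ha : Admissible a r) (hb : Admissible b s) :
    T a r 1 * tau r (T b s 1) - T b s 1 * tau s (T a r 1)
      = ((s a : ℂ)) • T b (r + s) 1 - ((r b : ℂ)) • T a (r + s) 1 := by
  have h := hbr a b r s ha hb 1
  rwa [Tstruct T h0 hbr ha (T b s 1), Tstruct T h0 hbr hb (T a r 1)] at h

end Glue

end W16aux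

open MvPolynomial

/-- Lemma 4: for a `W_n^+`-module `M = U(h_n)v ≅ ℂ[∂_1,...,∂_n]`
(`1 < n < ∞`) free of rank 1 over `U(h_n)` with `h_n` acting by multiplication,
`t_i^{k_i} ∂_i · v` lies in `ℂ[∂_i] v` for every `k_i ≥ -1`.  Here `T i k` is the
action of `t^k ∂_i` and `v = 1`. -/
theorem diagonal_action_in_single_variable {n : ℕ} (hn : 1 < n)
    (T : Fin n → (Fin n → ℤ) → (MvPolynomial (Fin n) ℂ →ₗ[ℂ] MvPolynomial (Fin n) ℂ))
    (h0 : ∀ (j : Fin n) (f : MvPolynomial (Fin n) ℂ), T j 0 f = X j * f)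
    (hbr : ∀ (i j : Fin n) (r s : Fin n → ℤ), Admissible i r → Admissible j s →
      ∀ f : MvPolynomial (Fin n) ℂ,
        T i r (T j s f) - T j s (T i r f)
          = (s i : ℂ) • T j (r + s) f - (r j : ℂ) • T i (r + s) f) :
    ∀ (i : Fin n) (ki : ℤ), -1 ≤ ki →
      ∃ g : Polynomial ℂ,
        T i (Pi.single i ki) (1 : MvPolynomial (Fin n) ℂ) = Polynomial.aeval (X i) g := by
  intro i ki hki
  classical
  suffices hva : ∀ j : Fin n, j ≠ i → j ∉ (T i (Pi.single i ki) 1).vars by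
    have hsub : ↑(T i (Pi.single i ki) 1).vars ⊆ ({i} : Set (Fin n)) := by
      intro l hl
      simp only [Set.mem_singleton_iff]
      by_contra hli
      exact hva l hli (by exact_mod_cast hl)
    have hsup : T i (Pi.single i ki) 1 ∈ supported ℂ ({i} : Set (Fin n)) :=
      mem_supported.mpr hsub
    rw [supported_eq_adjoin_X, Set.image_singleton,
      Algebra.adjoin_singleton_eq_range_aeval] at hsup
    obtain ⟨g, hg⟩ := hsup
    exact ⟨g, hg.symm⟩
  intro j hji
  have hij : i ≠ j := Ne.symm hji
  -- the A₀-level relations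
  have hR1 : ∀ k : ℤ, -1 ≤ k →
      T j (Pi.single j (-1)) 1 * W16aux.tau (Pi.single j (-1)) (T i (Pi.single i k) 1)
        = T i (Pi.single i k) 1
            * W16aux.tau (Pi.single i k) (T j (Pi.single j (-1)) 1) := by
    intro k hk
    have h := W16aux.rel T h0 hbr (W16aux.adm_single j (-1) (by norm_num))
      (W16aux.adm_single i k hk)
    rw [Pi.single_eq_of_ne hji, Pi.single_eq_of_ne hij] at h
    simp only [Int.cast_zero, zero_smul, sub_zero] at h
    exact sub_eq_zero.mp h
  have hR3 : ∀ k : ℤ, 0 ≤ k →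
      T i (Pi.single i (-1)) 1 * W16aux.tau (Pi.single i (-1)) (T i (Pi.single i k) 1)
        - T i (Pi.single i k) 1
            * W16aux.tau (Pi.single i k) (T i (Pi.single i (-1)) 1)
        = ((k : ℂ) + 1) • T i (Pi.single i (k - 1)) 1 := by
    intro k hk
    have h := W16aux.rel T h0 hbr (W16aux.adm_single i (-1) (by norm_num))
      (W16aux.adm_single i k (by omega))
    rw [Pi.single_eq_same, Pi.single_eq_same,
      show (Pi.single i (-1) + Pi.single i k : Fin n → ℤ) = Pi.single i (k - 1) by
        rw [← Pi.single_add (f := fun _ => ℤ)]; congr 1; ring] at h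
    rw [h, smul_eq_C_mul, smul_eq_C_mul, smul_eq_C_mul]
    push_cast [map_add, map_neg, map_one]
    ring
  have hR2 := W16aux.rel T h0 hbr (W16aux.adm_single j (-1) (by norm_num))
    (W16aux.adm_single j 1 (by norm_num))
  rw [Pi.single_eq_same, Pi.single_eq_same,
    show (Pi.single j (-1) + Pi.single j 1 : Fin n → ℤ) = 0 by
      rw [← Pi.single_add (f := fun _ => ℤ)]; norm_num, h0, mul_one] at hR2
  -- transport along `Psi j`
  set i' : {l : Fin n // l ≠ j} := ⟨i, hij⟩ with hi'def
  set Ψ := W16aux.Psi (n := n) j with hΨdef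
  set B : ℤ → Polynomial (MvPolynomial {l : Fin n // l ≠ j} ℂ) :=
    fun k => Ψ (T i (Pi.single i k) 1) with hBdef
  set Q := Ψ (T j (Pi.single j (-1)) 1) with hQdef
  set ι : ℤ → MvPolynomial {l : Fin n // l ≠ j} ℂ →+* MvPolynomial {l : Fin n // l ≠ j} ℂ :=
    fun k => (W16aux.iot j i' ((k : ℂ))).toRingHom with hιdef
  have hGi : ∀ (k : ℤ) (h : MvPolynomial (Fin n) ℂ),
      Ψ (W16aux.tau (Pi.single i k) h) = (Ψ h).map (ι k) := by
    intro k h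
    exact W16aux.G2 j i' k h
  have hshift : (Polynomial.X - Polynomial.C (C (((-1 : ℤ) : ℂ)))
      : Polynomial (MvPolynomial {l : Fin n // l ≠ j} ℂ))
      = Polynomial.X + Polynomial.C 1 := by
    norm_num
  have hQB : ∀ k : ℤ, -1 ≤ k →
      Q * (B k).comp (Polynomial.X + Polynomial.C 1) = B k * (Q.map (ι k)) := by
    intro k hk
    have h := congrArg Ψ (hR1 k hk)
    rw [map_mul, map_mul, W16aux.G1, hGi, hshift] at h
    exact h
  have hCH : ∀ k : ℤ, 0 ≤ k →
      B (-1) * (B k).map (ι (-1)) - B k * (B (-1)).map (ι k)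
        = ((k + 1 : ℤ) : Polynomial (MvPolynomial {l : Fin n // l ≠ j} ℂ)) * B (k - 1) := by
    intro k hk
    have h := congrArg Ψ (hR3 k hk)
    rw [map_sub, map_mul, map_mul, hGi, hGi, map_smul] at h
    rw [h, Algebra.smul_def]
    congr 1
    rw [show ((k : ℂ) + 1) = (((k + 1 : ℤ)) : ℂ) by push_cast; ring]
    exact map_intCast (algebraMap ℂ _) (k + 1)
  have hQne : Q ≠ 0 := by
    intro hq0
    have hq0' : T j (Pi.single j (-1)) 1 = 0 := by
      apply Ψ.injective
      rw [map_zero, ← hQdef]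
      exact hq0
    rw [hq0', zero_mul, map_zero, mul_zero, sub_zero] at hR2
    have h2 := hR2.symm
    norm_num at h2
  have hB0val : B 0 = Polynomial.C (X i') := by
    rw [hBdef]
    show Ψ (T i (Pi.single i (0 : ℤ)) 1) = _
    rw [Pi.single_zero, h0, mul_one]
    exact W16aux.Psi_X_ne j hij
  have hB0ne : B 0 ≠ 0 := by
    rw [hB0val]
    exact Polynomial.C_ne_zero.mpr (MvPolynomial.X_ne_zero i')
  have hιc : ∀ (a b : ℤ) (x), ι a (ι b x) = ι (a + b) x := by
    intro a b x
    show W16aux.iot j i' _ (W16aux.iot j i' _ x) = W16aux.iot j i' _ x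
    rw [W16aux.iot_comp]
    rw [Int.cast_add]
  have hι0 : ∀ x, ι 0 x = x := by
    intro x
    show W16aux.iot j i' (((0 : ℤ) : ℂ)) x = x
    rw [show (((0 : ℤ) : ℂ)) = 0 by norm_num]
    exact W16aux.iot_zero j i' x
  obtain ⟨c, hc⟩ := W16aux.core ι hιc hι0 B Q hQne hB0ne hQB hCH ki hki
  have hren : T i (Pi.single i ki) 1 = rename Subtype.val c := by
    apply Ψ.injective
    rw [W16aux.Psi_rename]
    exact hc
  intro hjv
  rw [hren] at hjv
  obtain ⟨v, _, hv⟩ := Finset.mem_image.mp (MvPolynomial.vars_rename Subtype.val c hjv)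
  exact v.prop hv
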